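/- Deleting a redundant character from a deposition sequence preserves all greedy embeddings: if position i of D is not used by the greedy embedding of any s ∈ S, then for each s ∈ S, the greedy embedding of s into D' (D with position i deleted) uses exactly the same characters-with-multiplicity, i.e., the embedding sequence of s into D' is obtained from that into D by deleting coordinate i (which was a gap '−' for every s). -/

import Mathlib

/-- The greedy leftmost embedding of a string `s` into a supersequence `D`:
a length-`|D|` list over `Option α` with `some c` at used positions and `none`
at gaps. -/
def emb {α : Type*} [DecidableEq α] : List α → List α → List (Option α)
  | [], _ => []
  | _ :: D, [] => none :: emb D []
  | d :: D, c :: s => if d = c then some c :: emb D s else none :: emb D (c :: s)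

/-- Hamming distance between two lists (of equal length): the number of
positions at which they differ. -/
def hammingL {β : Type*} [DecidableEq β] : List β → List β → ℕ
  | x :: xs, y :: ys => (if x = y then 0 else 1) + hammingL xs ys
  | _, _ => 0

lemma emb_key {α : Type*} [DecidableEq α] :
    ∀ (D s : List α) (i : ℕ), s.Sublist D → (emb D s)[i]? = some none →
      s.Sublist (D.eraseIdx i) ∧ emb (D.eraseIdx i) s = (emb D s).eraseIdx i := by
  intro D
  induction D with
  | nil => intro s i _ h; simp [emb] at h
  | cons d D ih =>
    intro s i hsub h
    match s with
    | [] =>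
      match i with
      | 0 => simp [emb]
      | (i+1) =>
        simp only [emb, List.getElem?_cons_succ] at h
        obtain ⟨h1, h2⟩ := ih [] i (List.nil_sublist _) h
        refine ⟨List.nil_sublist _, ?_⟩
        simp [emb, List.eraseIdx, h2]
    | c :: s =>
      by_cases hdc : d = c
      · subst hdc
        have hs : s.Sublist D := by
          cases hsub with
          | cons _ h' => exact (List.tail_sublist _).trans h'
          | cons_cons _ h' => exact h'
        match i with
        | 0 => simp [emb] at h
        | (i+1) =>
          simp only [emb, eq_self_iff_true, if_true, List.getElem?_cons_succ] at h
          obtain ⟨h1, h2⟩ := ih s i hs h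
          exact ⟨List.Sublist.cons₂ d h1, by simp [emb, List.eraseIdx, h2]⟩
      · have hs : (c :: s).Sublist D := by
          cases hsub with
          | cons _ h' => exact h'
          | cons_cons _ h' => exact absurd rfl hdc
        match i with
        | 0 => exact ⟨hs, by simp [emb, if_neg hdc]⟩
        | (i+1) =>
          simp only [emb, if_neg hdc, List.getElem?_cons_succ] at h
          obtain ⟨h1, h2⟩ := ih (c :: s) i hs h
          exact ⟨List.Sublist.cons d h1, by simp [emb, if_neg hdc, List.eraseIdx, h2]⟩

lemma hamL_erase {β : Type*} [DecidableEq β] :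
    ∀ (i : ℕ) (xs ys : List β) (a : β), xs[i]? = some a → ys[i]? = some a →
      hammingL (xs.eraseIdx i) (ys.eraseIdx i) = hammingL xs ys := by
  intro i
  induction i with
  | zero =>
    intro xs ys a hx hy
    match xs, ys with
    | x :: xs, y :: ys =>
      simp only [List.getElem?_cons_zero, Option.some.injEq] at hx hy
      subst hx; subst hy
      simp [hammingL]
    | [], _ => simp at hx
    | _ :: _, [] => simp at hy
  | succ i ih =>
    intro xs ys a hx hy
    match xs, ys with
    | x :: xs, y :: ys =>
      simp only [List.getElem?_cons_succ] at hx hy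
      simp [hammingL, List.eraseIdx, ih xs ys a hx hy]
    | [], _ => simp at hx
    | _ :: _, [] => simp at hy

/-- Deleting a redundant position `i` of `D` (a gap in the embedding of every
`s ∈ S`) preserves all greedy embeddings: each `s ∈ S` is still a subsequence
of `D' = D.eraseIdx i`, its embedding into `D'` is the old embedding with
coordinate `i` removed, and all pairwise Hamming distances of embeddings are
preserved. -/
theorem stmt_13 {α : Type*} [DecidableEq α] (D : List α) (S : Finset (List α))
    (hsub : ∀ s ∈ S, s.Sublist D) (i : ℕ) (hi : i < D.length)
    (hred : ∀ s ∈ S, (emb D s)[i]? = some none) :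
    (∀ s ∈ S, s.Sublist (D.eraseIdx i) ∧ emb (D.eraseIdx i) s = (emb D s).eraseIdx i) ∧
    (∀ s ∈ S, ∀ t ∈ S,
      hammingL (emb (D.eraseIdx i) s) (emb (D.eraseIdx i) t) =
        hammingL (emb D s) (emb D t)) := by
  refine ⟨fun s hs => emb_key D s i (hsub s hs) (hred s hs), fun s hs t ht => ?_⟩
  rw [(emb_key D s i (hsub s hs) (hred s hs)).2, (emb_key D t i (hsub t ht) (hred t ht)).2]
  exact hamL_erase i _ _ none (hred s hs) (hred t ht)
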